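/- arXiv:2604.20794 — 3 statements merged into one kernel-verified Lean document; each statement's English description precedes it below -/
import Mathlib

section
/- Let H, D : [0,1] → ℝ be differentiable with H > 0, and set N = D/H. Suppose f(·,t) ∈ L² is smooth, 𝒮 symmetric and 𝒜 skew-symmetric operators, H(t) = ‖f(t)‖² and D(t) = ⟨𝒮f, f⟩. Then ∂_t N ≥ (⟨𝒮_t f + [𝒮,𝒜]f, f⟩)/H - ‖∂_t f - 𝒜f - 𝒮f‖²/(2H). -/
set_option maxHeartbeats 1000000 in
/-- Abstract logarithmic convexity frequency bound: with `H(t) = ‖f(t)‖²`,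
`D(t) = ⟨𝒮f, f⟩` and `N = D/H`, one has
`∂_t N ≥ ⟨𝒮_t f + [𝒮,𝒜]f, f⟩/H - ‖∂_t f - 𝒜f - 𝒮f‖²/(2H)`. -/
theorem frequency_derivative_lower_bound {E : Type*} [NormedAddCommGroup E]
    [InnerProductSpace ℂ E]
    (f f' : ℝ → E) (S S' A : ℝ → E →L[ℂ] E)
    (hf : ∀ t, HasDerivAt f (f' t) t)
    (hS : ∀ t, HasDerivAt S (S' t) t)
    (hsym : ∀ (t : ℝ) (x y : E), (inner ℂ (S t x) y : ℂ) = inner ℂ x (S t y))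
    (hskew : ∀ (t : ℝ) (x y : E), (inner ℂ (A t x) y : ℂ) = - inner ℂ x (A t y))
    (hne : ∀ t, f t ≠ 0)
    (t : ℝ) (ht : t ∈ Set.Icc (0:ℝ) 1) :
    ((inner ℂ (S' t (f t) + (S t (A t (f t)) - A t (S t (f t)))) (f t) : ℂ).re / ‖f t‖ ^ 2
      - ‖f' t - A t (f t) - S t (f t)‖ ^ 2 / (2 * ‖f t‖ ^ 2))
    ≤ deriv (fun s => (inner ℂ (S s (f s)) (f s) : ℂ).re / ‖f s‖ ^ 2) t := by
  letI : InnerProductSpace ℝ E := InnerProductSpace.complexToReal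
  have hre : ∀ x y : E, (inner ℂ x y : ℂ).re = (inner ℝ x y : ℝ) := fun x y => rfl
  have hrsym : ∀ (x y : E), (inner ℝ (S t x) y : ℝ) = inner ℝ x (S t y) := by
    intro x y
    have h2 := congrArg Complex.re (hsym t x y)
    rw [hre, hre] at h2; exact h2
  have hrskew : ∀ (x y : E), (inner ℝ (A t x) y : ℝ) = - inner ℝ x (A t y) := by
    intro x y
    have h2 := congrArg Complex.re (hskew t x y)
    rw [hre] at h2
    simpa [hre] using h2
  have hpos : (0:ℝ) < ‖f t‖ ^ 2 :=
    pow_pos (norm_pos_iff.mpr (hne t)) 2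
  -- derivative computation
  have hSr : HasDerivAt (fun s => (S s).restrictScalars ℝ) ((S' t).restrictScalars ℝ) t :=
    (ContinuousLinearMap.restrictScalarsL ℂ E E ℝ ℝ).hasFDerivAt.comp_hasDerivAt t (hS t)
  have hSf : HasDerivAt (fun s => S s (f s)) ((S' t) (f t) + (S t) (f' t)) t := by
    have := hSr.clm_apply (hf t)
    simpa using this
  have hnum : HasDerivAt (fun s => (inner ℝ (S s (f s)) (f s) : ℝ))
      ((inner ℝ (S t (f t)) (f' t) : ℝ)
        + (inner ℝ ((S' t) (f t) + (S t) (f' t)) (f t) : ℝ)) t :=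
    hSf.inner ℝ (hf t)
  have hden : HasDerivAt (fun s => ‖f s‖ ^ 2) (2 * (inner ℝ (f t) (f' t) : ℝ)) t :=
    (hf t).norm_sq
  have hq := hnum.div hden (ne_of_gt hpos)
  have hderiv : deriv (fun s => (inner ℂ (S s (f s)) (f s) : ℂ).re / ‖f s‖ ^ 2) t
      = (((inner ℝ (S t (f t)) (f' t) : ℝ)
          + (inner ℝ ((S' t) (f t) + (S t) (f' t)) (f t) : ℝ)) * ‖f t‖ ^ 2
          - (inner ℝ (S t (f t)) (f t) : ℝ) * (2 * (inner ℝ (f t) (f' t) : ℝ)))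
        / (‖f t‖ ^ 2) ^ 2 := hq.deriv
  rw [hderiv]
  -- scalar abbreviations
  set u := f t with hu
  set v := f' t with hv
  set g := v - A t u - S t u with hg
  have hvg : v = g + A t u + S t u := by rw [hg]; abel
  set h := ‖u‖ ^ 2 with hhdef
  set a : ℝ := inner ℝ (S t u) u with ha
  set c : ℝ := inner ℝ (S t u) (A t u) with hc
  set p : ℝ := inner ℝ (S t u) g with hp
  set q : ℝ := inner ℝ u g with hq2
  set k : ℝ := inner ℝ (S' t u) u with hk
  set s2 := ‖S t u‖ ^ 2 with hs2
  set w := ‖g‖ ^ 2 with hw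
  have ec1 : (inner ℝ u (S t u) : ℝ) = a := real_inner_comm _ _
  have ec2 : (inner ℝ g (S t u) : ℝ) = p := real_inner_comm _ _
  have ec3 : (inner ℝ g u : ℝ) = q := real_inner_comm _ _
  have ec4 : (inner ℝ (A t u) u : ℝ) = 0 := by
    have h1 := hrskew u u
    have h2 : (inner ℝ u (A t u) : ℝ) = (inner ℝ (A t u) u : ℝ) := real_inner_comm _ _
    linarith [h1, h2.symm ▸ h1]
  have ec5 : (inner ℝ u (A t u) : ℝ) = 0 := by
    rw [real_inner_comm]; exact ec4
  have e1 : (inner ℝ (S t u) v : ℝ) = c + s2 + p := by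
    rw [hvg]
    simp only [inner_add_right]
    rw [real_inner_self_eq_norm_sq]
    ring
  have e2 : (inner ℝ (S t v) u : ℝ) = c + s2 + p := by
    rw [hrsym v u, real_inner_comm, e1]
  have e3 : (inner ℝ u v : ℝ) = a + q := by
    rw [hvg]
    simp only [inner_add_right]
    rw [ec5, ec1]
    ring
  have e4 : ((inner ℂ (S' t u + (S t (A t u) - A t (S t u))) u : ℂ)).re = k + 2 * c := by
    rw [hre]
    simp only [inner_add_left, inner_sub_left]
    have eA : (inner ℝ (S t (A t u)) u : ℝ) = c := by
      rw [hrsym (A t u) u, real_inner_comm]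
    have eB : (inner ℝ (A t (S t u)) u : ℝ) = -c := by
      rw [hrskew (S t u) u]
    rw [eA, eB, ← hk]
    ring
  -- key positivity
  have key : (0:ℝ) ≤ 4*h^2*s2 + h^2*w + 4*h^2*p - 4*a^2*h - 4*a*h*q := by
    have hz := real_inner_self_nonneg (F := E)
      (x := (2*h) • S t u - (2*a) • u + h • g)
    simp only [inner_sub_left, inner_sub_right, inner_add_left, inner_add_right,
      real_inner_smul_left, real_inner_smul_right, real_inner_self_eq_norm_sq,
      norm_smul, mul_pow, Real.norm_eq_abs, sq_abs,
      ec1, ec2, ec3] at hz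
    rw [← ha, ← hp, ← hq2, ← hs2, ← hw, ← hhdef] at hz
    nlinarith [hz]
  rw [e4, e1, e3]
  have eS : (inner ℝ ((S' t) u + (S t) v) u : ℝ) = k + (c + s2 + p) := by
    rw [inner_add_left, e2, ← hk]
  rw [eS]
  have h2pos : (0:ℝ) < 2 * h := by linarith
  rw [div_sub_div _ _ (ne_of_gt hpos) (ne_of_gt h2pos),
    div_le_div_iff₀ (by positivity) (by positivity)]
  have hstep : (0:ℝ) ≤ h * (4*h^2*s2 + h^2*w + 4*h^2*p - 4*a^2*h - 4*a*h*q) :=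
    mul_nonneg (le_of_lt hpos) key
  nlinarith [hstep]
end

section
/- Under the abstract setting, ∂_t² H(t) = 2∂_t Re⟨∂_t f - 𝒮f - 𝒜f, f⟩ + 2⟨𝒮_t f + [𝒮,𝒜]f, f⟩ + ‖∂_t f - 𝒜f + 𝒮f‖² - ‖∂_t f - 𝒜f - 𝒮f‖². -/
section Aux
variable {E : Type*} [NormedAddCommGroup E] [InnerProductSpace ℂ E]

private lemma re_inner_symm' (x y : E) : (inner ℂ x y : ℂ).re = (inner ℂ y x : ℂ).re := by
  rw [← inner_conj_symm, Complex.conj_re]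

private lemma hasDerivAt_clm_apply' {B : ℝ → E →L[ℂ] E} {b : E →L[ℂ] E} {g : ℝ → E} {g' : E}
    {x : ℝ} (hB : HasDerivAt B b x) (hg : HasDerivAt g g' x) :
    HasDerivAt (fun s => B s (g s)) (b (g x) + B x g') x := by
  have hB2 : HasDerivAt (fun s => (B s).restrictScalars ℝ) (b.restrictScalars ℝ) x :=
    (ContinuousLinearMap.restrictScalarsIsometry ℂ E E ℝ ℝ).toContinuousLinearMap.hasFDerivAt.comp_hasDerivAt x hB
  exact hB2.clm_apply hg

private lemma hasDerivAt_re_inner' {f g : ℝ → E} {f' g' : E} {x : ℝ}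
    (hf : HasDerivAt f f' x) (hg : HasDerivAt g g' x) :
    HasDerivAt (fun s => (inner ℂ (f s) (g s) : ℂ).re)
      ((inner ℂ (f x) g' : ℂ).re + (inner ℂ f' (g x) : ℂ).re) x := by
  have h := hf.inner ℂ hg
  have := Complex.reCLM.hasFDerivAt.comp_hasDerivAt x h
  exact this

end Aux

/-- Abstract identity for the second derivative of `H(t) = ‖f(t)‖²`:
`∂_t² H = 2 ∂_t Re⟨∂_t f - 𝒮f - 𝒜f, f⟩ + 2⟨𝒮_t f + [𝒮,𝒜]f, f⟩
  + ‖∂_t f - 𝒜f + 𝒮f‖² - ‖∂_t f - 𝒜f - 𝒮f‖²`. -/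
theorem second_derivative_identity {E : Type*} [NormedAddCommGroup E]
    [InnerProductSpace ℂ E]
    (f f' f'' : ℝ → E) (S S' A A' : ℝ → E →L[ℂ] E)
    (hf : ∀ t, HasDerivAt f (f' t) t)
    (hf' : ∀ t, HasDerivAt f' (f'' t) t)
    (hS : ∀ t, HasDerivAt S (S' t) t)
    (hA : ∀ t, HasDerivAt A (A' t) t)
    (hsym : ∀ (t : ℝ) (x y : E), (inner ℂ (S t x) y : ℂ) = inner ℂ x (S t y))
    (hskew : ∀ (t : ℝ) (x y : E), (inner ℂ (A t x) y : ℂ) = - inner ℂ x (A t y))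
    (t : ℝ) :
    deriv (deriv (fun s => ‖f s‖ ^ 2)) t =
      2 * deriv (fun s => (inner ℂ (f' s - S s (f s) - A s (f s)) (f s) : ℂ).re) t
      + 2 * (inner ℂ (S' t (f t) + (S t (A t (f t)) - A t (S t (f t)))) (f t) : ℂ).re
      + ‖f' t - A t (f t) + S t (f t)‖ ^ 2
      - ‖f' t - A t (f t) - S t (f t)‖ ^ 2 := by
  -- Step 1: first derivative of H
  have hH : deriv (fun s => ‖f s‖ ^ 2) = fun s => 2 * (inner ℂ (f' s) (f s) : ℂ).re := by
    funext s
    have h1 := hasDerivAt_re_inner' (hf s) (hf s)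
    have h2 : HasDerivAt (fun s => ‖f s‖ ^ 2)
        ((inner ℂ (f s) (f' s) : ℂ).re + (inner ℂ (f' s) (f s) : ℂ).re) s := by
      convert h1 using 2 with r
      exact norm_sq_eq_re_inner (𝕜 := ℂ) (f r)
    rw [h2.deriv, re_inner_symm']
    ring
  rw [hH]
  -- Step 2: second derivative of H
  have hL : HasDerivAt (fun s => 2 * (inner ℂ (f' s) (f s) : ℂ).re)
      (2 * ((inner ℂ (f' t) (f' t) : ℂ).re + (inner ℂ (f'' t) (f t) : ℂ).re)) t :=
    (hasDerivAt_re_inner' (hf' t) (hf t)).const_mul 2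
  rw [hL.deriv]
  -- Step 3: derivative of the first RHS term
  have hG : HasDerivAt (fun s => (inner ℂ (f' s - S s (f s) - A s (f s)) (f s) : ℂ).re)
      ((inner ℂ (f' t - S t (f t) - A t (f t)) (f' t) : ℂ).re
        + (inner ℂ (f'' t - (S' t (f t) + S t (f' t)) - (A' t (f t) + A t (f' t))) (f t) : ℂ).re) t :=
    hasDerivAt_re_inner'
      (((hf' t).sub (hasDerivAt_clm_apply' (hS t) (hf t))).sub (hasDerivAt_clm_apply' (hA t) (hf t))) (hf t)
  rw [hG.deriv]
  -- Step 4: Re⟨A' u, u⟩ = 0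
  have hre0 : ∀ s, (inner ℂ (A s (f t)) (f t) : ℂ).re = 0 := by
    intro s
    have h := congrArg Complex.re (hskew s (f t) (f t))
    rw [Complex.neg_re] at h
    have h2 := re_inner_symm' (A s (f t)) (f t)
    linarith
  have hA'0 : (inner ℂ (A' t (f t)) (f t) : ℂ).re = 0 := by
    have h1 : HasDerivAt (fun s => (inner ℂ (A s (f t)) (f t) : ℂ).re)
        ((inner ℂ (A t (f t)) (0 : E) : ℂ).re + (inner ℂ (A' t (f t) + A t 0) (f t) : ℂ).re) t :=
      hasDerivAt_re_inner' (hasDerivAt_clm_apply' (hA t) (hasDerivAt_const t (f t)))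
        (hasDerivAt_const t (f t))
    have h2 : (fun s => (inner ℂ (A s (f t)) (f t) : ℂ).re) = fun _ => (0 : ℝ) :=
      funext hre0
    rw [h2] at h1
    have h3 := (hasDerivAt_const t (0 : ℝ)).unique h1
    simpa using h3.symm
  -- Step 5/6: symmetry/skewness facts at the level of real parts
  have a1 : (inner ℂ (S t (f' t)) (f t) : ℂ).re = (inner ℂ (f' t) (S t (f t)) : ℂ).re :=
    congrArg Complex.re (hsym t (f' t) (f t))
  have a2 : (inner ℂ (S t (f t)) (f' t) : ℂ).re = (inner ℂ (f' t) (S t (f t)) : ℂ).re :=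
    re_inner_symm' ..
  have a3 : (inner ℂ (A t (f' t)) (f t) : ℂ).re = - (inner ℂ (f' t) (A t (f t)) : ℂ).re := by
    have h := congrArg Complex.re (hskew t (f' t) (f t))
    rw [Complex.neg_re] at h
    exact h
  have a4 : (inner ℂ (A t (f t)) (f' t) : ℂ).re = (inner ℂ (f' t) (A t (f t)) : ℂ).re :=
    re_inner_symm' ..
  have a6 : (inner ℂ (S t (A t (f t))) (f t) : ℂ).re = (inner ℂ (A t (f t)) (S t (f t)) : ℂ).re :=
    congrArg Complex.re (hsym t (A t (f t)) (f t))
  have a7 : (inner ℂ (A t (S t (f t))) (f t) : ℂ).re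
      = - (inner ℂ (A t (f t)) (S t (f t)) : ℂ).re := by
    have h := congrArg Complex.re (hskew t (S t (f t)) (f t))
    rw [Complex.neg_re] at h
    rw [h, re_inner_symm']
  -- Step 7: pure algebra
  rw [norm_add_sq (𝕜 := ℂ) (x := f' t - A t (f t)) (y := S t (f t)),
      norm_sub_sq (𝕜 := ℂ) (x := f' t - A t (f t)) (y := S t (f t))]
  simp only [inner_sub_left, inner_add_left, Complex.sub_re, Complex.add_re,
    RCLike.re_to_complex]
  linarith [a1, a2, a3, a4, a6, a7, hA'0, hre0 t]
end

section
/- Let 𝒮, 𝒜 be as in the abstract lemma and suppose ‖∂_t f - (𝒮+𝒜)f‖ ≤ M₁‖f‖ + ‖W(t)‖ on [0,1], ⟨(𝒮_t + [𝒮,𝒜])g, g⟩ ≥ -M₀‖g‖² for all g, and M₂ = sup_{t∈[0,1]} ‖W(t)‖/‖f(t)‖ < ∞. If H(0), H(1) < ∞ and H(t) < ∞ for all t, then there is a universal constant N ≥ 0 such that H(t) ≤ e^{N(M₀+M₁+M₂+M₁²+M₂²)} H(0)^{1-t} H(1)^{t} for all t ∈ [0,1]. -/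
open Set

lemma my_mono {g g' : ℝ → ℝ} {a b : ℝ} (hab : a ≤ b)
    (hd : ∀ t ∈ Set.Icc a b, HasDerivAt g (g' t) t)
    (h0 : ∀ t ∈ Set.Icc a b, 0 ≤ g' t) : g a ≤ g b := by
  have : MonotoneOn g (Set.Icc a b) := by
    apply monotoneOn_of_hasDerivWithinAt_nonneg (convex_Icc a b)
      (fun t ht => (hd t ht).continuousAt.continuousWithinAt)
      (fun t ht => ((hd t (interior_subset ht)).hasDerivWithinAt))
      (fun t ht => h0 t (interior_subset ht))
  exact this (Set.left_mem_Icc.2 hab) (Set.right_mem_Icc.2 hab) hab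

lemma my_deriv_le {g g' : ℝ → ℝ} {a b B : ℝ} (hab : a ≤ b)
    (hd : ∀ t ∈ Set.Icc a b, HasDerivAt g (g' t) t)
    (hB : ∀ t ∈ Set.Icc a b, g' t ≤ B) : g b - g a ≤ B * (b - a) := by
  have h := my_mono (g := fun t => B * t - g t) (g' := fun t => B - g' t) hab
    (fun t ht => ((hasDerivAt_id t).const_mul B).congr_deriv (by ring) |>.sub (hd t ht))
    (fun t ht => sub_nonneg.2 (hB t ht))
  nlinarith [h]

lemma my_le_deriv {g g' : ℝ → ℝ} {a b B : ℝ} (hab : a ≤ b)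
    (hd : ∀ t ∈ Set.Icc a b, HasDerivAt g (g' t) t)
    (hB : ∀ t ∈ Set.Icc a b, B ≤ g' t) : B * (b - a) ≤ g b - g a := by
  have h := my_mono (g := fun t => g t - B * t) (g' := fun t => g' t - B) hab
    (fun t ht => (hd t ht).sub (((hasDerivAt_id t).const_mul B).congr_deriv (by ring)))
    (fun t ht => sub_nonneg.2 (hB t ht))
  nlinarith [h]

lemma aux_quad {P I1 IV ip D H V eN X M₀ M : ℝ}
    (hprod : (-M₀ * H + 2 * P + 2 * I1) * H ≤ X * H)
    (hkey : 2 * H * P - 2 * D ^ 2 + 2 * H * I1 - 2 * D * ip = 2 * H * V ^ 2 + 2 * H * IV)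
    (hint1 : 0 ≤ H * (2 * V - eN) ^ 2)
    (hint2 : 0 ≤ H * (IV + V * eN))
    (hint3 : 0 ≤ H * (M ^ 2 * H - eN ^ 2)) :
    -(M₀ + M ^ 2 / 2) * H ^ 2 ≤ X * H - D * (2 * D + 2 * ip) := by
  linarith [hprod, hkey.le, hkey.ge, hint1, hint2, hint3]

set_option maxHeartbeats 4000000 in
/-- Abstract logarithmic convexity lemma (Escauriaza–Kenig–Ponce–Vega): under the stated
bounds there is a universal constant `N ≥ 0` such that
`H(t) ≤ e^{N(M₀+M₁+M₂+M₁²+M₂²)} H(0)^{1-t} H(1)^t` on `[0,1]`. -/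
theorem abstract_log_convexity :
    ∃ N : ℝ, 0 ≤ N ∧
      ∀ (E : Type) [NormedAddCommGroup E] [InnerProductSpace ℂ E]
        (f f' : ℝ → E) (S S' A : ℝ → E →L[ℂ] E) (W : ℝ → E) (M₀ M₁ M₂ : ℝ),
        0 ≤ M₀ → 0 ≤ M₁ → 0 ≤ M₂ →
        (∀ t, HasDerivAt f (f' t) t) →
        (∀ t, HasDerivAt S (S' t) t) →
        (∀ (t : ℝ) (x y : E), (inner ℂ (S t x) y : ℂ) = inner ℂ x (S t y)) →
        (∀ (t : ℝ) (x y : E), (inner ℂ (A t x) y : ℂ) = - inner ℂ x (A t y)) →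
        (∀ t ∈ Set.Icc (0:ℝ) 1,
          ‖f' t - (S t (f t) + A t (f t))‖ ≤ M₁ * ‖f t‖ + ‖W t‖) →
        (∀ t ∈ Set.Icc (0:ℝ) 1, ∀ g : E,
          -M₀ * ‖g‖ ^ 2 ≤ (inner ℂ (S' t g + (S t (A t g) - A t (S t g))) g : ℂ).re) →
        (∀ t ∈ Set.Icc (0:ℝ) 1, ‖W t‖ ≤ M₂ * ‖f t‖) →
        ∀ t ∈ Set.Icc (0:ℝ) 1,
          ‖f t‖ ^ 2 ≤ Real.exp (N * (M₀ + M₁ + M₂ + M₁ ^ 2 + M₂ ^ 2)) *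
            (‖f 0‖ ^ 2) ^ (1 - t) * (‖f 1‖ ^ 2) ^ t := by
  refine ⟨4, by norm_num, ?_⟩
  intro E _i1 _i2 f f' S S' A W M₀ M₁ M₂ hM₀ hM₁ hM₂ hf hS hSsym hAskew hbound hcomm hWb t ht
  letI : InnerProductSpace ℝ E := InnerProductSpace.complexToReal
  have rr : ∀ x y : E, (inner ℝ x y : ℝ) = (inner ℂ x y : ℂ).re := fun x y => rfl
  obtain ⟨ht0, ht1⟩ := ht
  set M : ℝ := M₁ + M₂ with hMdef
  have hM : 0 ≤ M := by positivity
  set e : ℝ → E := fun s => f' s - (S s (f s) + A s (f s)) with he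
  have henorm : ∀ s ∈ Set.Icc (0:ℝ) 1, ‖e s‖ ≤ M * ‖f s‖ := by
    intro s hs
    have h2 := hWb s hs
    calc ‖e s‖ = ‖f' s - (S s (f s) + A s (f s))‖ := by rw [he]
      _ ≤ M₁ * ‖f s‖ + ‖W s‖ := hbound s hs
      _ ≤ M₁ * ‖f s‖ + M₂ * ‖f s‖ := by linarith
      _ = M * ‖f s‖ := by rw [hMdef]; ring
  have hfe : ∀ s : ℝ, f' s = S s (f s) + A s (f s) + e s := by
    intro s; simp [he]
  -- basic derivative facts
  set H : ℝ → ℝ := fun s => ‖f s‖ ^ 2 with hHdef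
  have hHinner : ∀ s : ℝ, H s = (inner ℝ (f s) (f s) : ℝ) := by
    intro s; rw [real_inner_self_eq_norm_sq]
  have hH : ∀ s : ℝ, HasDerivAt H (2 * (inner ℝ (f' s) (f s) : ℝ)) s := by
    intro s
    have h := (hf s).inner ℝ (hf s)
    have : HasDerivAt (fun u => (inner ℝ (f u) (f u) : ℝ)) (2 * (inner ℝ (f' s) (f s) : ℝ)) s := by
      refine h.congr_deriv ?_
      rw [real_inner_comm]; ring
    exact this.congr_of_eventuallyEq (Filter.Eventually.of_forall fun u => (hHinner u))
  -- skew part kills itself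
  have skew0 : ∀ (s : ℝ) (x : E), (inner ℝ (A s x) x : ℝ) = 0 := by
    intro s x
    have h := hAskew s x x
    rw [← inner_conj_symm x (A s x)] at h
    have := congrArg Complex.re h
    rw [rr]
    simp only [Complex.neg_re, Complex.conj_re] at this ⊢
    linarith
  -- real symmetry of S
  have sym : ∀ (s : ℝ) (x y : E), (inner ℝ (S s x) y : ℝ) = (inner ℝ x (S s y) : ℝ) := by
    intro s x y; rw [rr, rr, hSsym s x y]
  -- H' rewrite
  set D : ℝ → ℝ := fun s => (inner ℝ (S s (f s)) (f s) : ℝ) with hDdef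
  have hH' : ∀ s : ℝ, HasDerivAt H (2 * D s + 2 * (inner ℝ (e s) (f s) : ℝ)) s := by
    intro s
    have h := hH s
    have : (2 : ℝ) * (inner ℝ (f' s) (f s) : ℝ) = 2 * D s + 2 * (inner ℝ (e s) (f s) : ℝ) := by
      rw [hfe s]
      rw [inner_add_left, inner_add_left, skew0]
      simp [hDdef]
      ring
    rwa [this] at h
  -- D derivative
  have hSr : ∀ s : ℝ, HasDerivAt (fun u => (S u).restrictScalars ℝ)
      ((S' s).restrictScalars ℝ) s := by
    intro s
    exact ((ContinuousLinearMap.restrictScalarsIsometry ℂ E E ℝ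
      ℝ).toContinuousLinearMap.hasFDerivAt.comp_hasDerivAt s (hS s))
  have hg : ∀ s : ℝ, HasDerivAt (fun u => S u (f u)) (S' s (f s) + S s (f' s)) s := by
    intro s
    exact ((hSr s).clm_apply (hf s))
  have hD : ∀ s : ℝ, HasDerivAt D
      ((inner ℝ (S' s (f s)) (f s) : ℝ) + 2 * (inner ℝ (S s (f s)) (f' s) : ℝ)) s := by
    intro s
    have h := (hg s).inner ℝ (hf s)
    refine h.congr_deriv ?_
    rw [inner_add_left, sym s (f' s) (f s), real_inner_comm (f' s) (S s (f s))]
    ring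
  -- lower bound on D' for s in Icc
  have hDlow : ∀ s ∈ Set.Icc (0:ℝ) 1,
      -M₀ * H s + 2 * ‖S s (f s)‖ ^ 2 + 2 * (inner ℝ (S s (f s)) (e s) : ℝ)
        ≤ (inner ℝ (S' s (f s)) (f s) : ℝ) + 2 * (inner ℝ (S s (f s)) (f' s) : ℝ) := by
    intro s hs
    have hc := hcomm s hs (f s)
    -- expand f'
    have hexp : (inner ℝ (S s (f s)) (f' s) : ℝ)
        = ‖S s (f s)‖ ^ 2 + (inner ℝ (S s (f s)) (A s (f s)) : ℝ)
          + (inner ℝ (S s (f s)) (e s) : ℝ) := by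
      rw [hfe s, inner_add_right, inner_add_right, real_inner_self_eq_norm_sq]
    -- commutator identity
    have hcommId : (inner ℝ (S s (A s (f s)) - A s (S s (f s))) (f s) : ℝ)
        = 2 * (inner ℝ (S s (f s)) (A s (f s)) : ℝ) := by
      rw [inner_sub_left]
      have h1 : (inner ℝ (S s (A s (f s))) (f s) : ℝ) = (inner ℝ (S s (f s)) (A s (f s)) : ℝ) := by
        rw [sym s (A s (f s)) (f s), real_inner_comm]
      have h2 : (inner ℝ (A s (S s (f s))) (f s) : ℝ)
          = -(inner ℝ (S s (f s)) (A s (f s)) : ℝ) := by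
        rw [rr, rr, hAskew s (S s (f s)) (f s)]
        simp
      rw [h1, h2]; ring
    have hcre : -M₀ * H s ≤ (inner ℝ (S' s (f s)) (f s) : ℝ)
        + (inner ℝ (S s (A s (f s)) - A s (S s (f s))) (f s) : ℝ) := by
      rw [rr, rr]
      have : (inner ℂ (S' s (f s) + (S s (A s (f s)) - A s (S s (f s)))) (f s) : ℂ).re
          = (inner ℂ (S' s (f s)) (f s) : ℂ).re
            + (inner ℂ (S s (A s (f s)) - A s (S s (f s))) (f s) : ℂ).re := by
        rw [inner_add_left]; simp [inner_sub_left]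
      rw [hHdef]
      calc -M₀ * ‖f s‖ ^ 2 ≤ _ := hc
        _ = _ := this
    rw [hexp]
    nlinarith [hcre, hcommId]
  -- operator norm bound on S over Icc
  obtain ⟨K, hK⟩ : ∃ K : ℝ, ∀ s ∈ Set.Icc (0:ℝ) 1, ‖S s‖ ≤ K := by
    obtain ⟨K, hK⟩ := (isCompact_Icc (a := (0:ℝ)) (b := 1)).exists_bound_of_continuousOn
      (fun s _ => ((hS s).continuousAt.continuousWithinAt))
    exact ⟨K, hK⟩
  have hK0 : 0 ≤ K := le_trans (norm_nonneg _) (hK 0 (by norm_num))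
  -- |H'| ≤ c H on Icc
  set c : ℝ := 2 * K + 2 * M with hcdef
  have hHderiv_bound : ∀ s ∈ Set.Icc (0:ℝ) 1,
      |2 * D s + 2 * (inner ℝ (e s) (f s) : ℝ)| ≤ c * H s := by
    intro s hs
    have h1 : |D s| ≤ K * ‖f s‖ ^ 2 := by
      have := abs_real_inner_le_norm (S s (f s)) (f s)
      have h2 : ‖S s (f s)‖ ≤ K * ‖f s‖ := le_trans ((S s).le_opNorm (f s))
        (mul_le_mul_of_nonneg_right (hK s hs) (norm_nonneg _))
      calc |D s| ≤ ‖S s (f s)‖ * ‖f s‖ := this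
        _ ≤ K * ‖f s‖ * ‖f s‖ := mul_le_mul_of_nonneg_right h2 (norm_nonneg _)
        _ = K * ‖f s‖ ^ 2 := by ring
    have h3 : |(inner ℝ (e s) (f s) : ℝ)| ≤ M * ‖f s‖ ^ 2 := by
      have := abs_real_inner_le_norm (e s) (f s)
      calc |(inner ℝ (e s) (f s) : ℝ)| ≤ ‖e s‖ * ‖f s‖ := this
        _ ≤ M * ‖f s‖ * ‖f s‖ := mul_le_mul_of_nonneg_right (henorm s hs) (norm_nonneg _)
        _ = M * ‖f s‖ ^ 2 := by ring
    rw [hcdef, hHdef]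
    calc |2 * D s + 2 * (inner ℝ (e s) (f s) : ℝ)|
        ≤ 2 * |D s| + 2 * |(inner ℝ (e s) (f s) : ℝ)| := by
          calc _ ≤ |2 * D s| + |2 * (inner ℝ (e s) (f s) : ℝ)| := abs_add_le _ _
            _ = _ := by rw [abs_mul, abs_mul]; norm_num
      _ ≤ 2 * (K * ‖f s‖ ^ 2) + 2 * (M * ‖f s‖ ^ 2) := by
          have := abs_nonneg (D s); nlinarith [h1, h3]
      _ = (2 * K + 2 * M) * ‖f s‖ ^ 2 := by ring
  have hHnn : ∀ s : ℝ, 0 ≤ H s := fun s => by positivity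
  -- case split on positivity of H on Icc
  by_cases hpos : ∀ s ∈ Set.Icc (0:ℝ) 1, 0 < H s
  · -- main case: H positive on [0,1]
    have hHs : ∀ s : ℝ, H s = ‖f s‖ ^ 2 := fun s => by rw [hHdef]
    set lam : ℝ → ℝ := fun s => D s / H s with hlamdef
    set lam' : ℝ → ℝ := fun s =>
      (((inner ℝ (S' s (f s)) (f s) : ℝ) + 2 * (inner ℝ (S s (f s)) (f' s) : ℝ)) * H s
        - D s * (2 * D s + 2 * (inner ℝ (e s) (f s) : ℝ))) / (H s) ^ 2 with hlam'def
    have hlamD : ∀ s ∈ Set.Icc (0:ℝ) 1, HasDerivAt lam (lam' s) s := by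
      intro s hs
      exact (hD s).div (hH' s) (ne_of_gt (hpos s hs))
    set c₀ : ℝ := M₀ + M ^ 2 / 2 with hc₀def
    have hc₀ : 0 ≤ c₀ := by rw [hc₀def]; positivity
    have hlam_low : ∀ s ∈ Set.Icc (0:ℝ) 1, -c₀ ≤ lam' s := by
      intro s hs
      have hH0 : 0 < H s := hpos s hs
      have hip : |(inner ℝ (e s) (f s) : ℝ)| ≤ M * H s := by
        have h1 := abs_real_inner_le_norm (e s) (f s)
        have h2 := henorm s hs
        rw [hHs s]
        nlinarith [mul_le_mul_of_nonneg_right h2 (norm_nonneg (f s))]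
      have he2 : ‖e s‖ ^ 2 ≤ M ^ 2 * H s := by
        have h2 := henorm s hs
        rw [hHs s]
        nlinarith [norm_nonneg (e s), norm_nonneg (f s)]
      rw [hlam'def]
      beta_reduce
      rw [le_div_iff₀ (by positivity)]
      set v : E := S s (f s) - (D s / H s) • f s with hv
      have hv2 : ‖v‖ ^ 2 = ‖S s (f s)‖ ^ 2 - 2 * (D s / H s) * D s + (D s / H s) ^ 2 * H s := by
        rw [hv, norm_sub_sq_real, real_inner_smul_right, norm_smul]
        rw [hHs s, hDdef]
        simp [abs_sq, mul_pow]
        ring_nf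
        rw [sq_abs]
        ring
      have hve : (inner ℝ v (e s) : ℝ)
          = (inner ℝ (S s (f s)) (e s) : ℝ) - (D s / H s) * (inner ℝ (f s) (e s) : ℝ) := by
        rw [hv, inner_sub_left, real_inner_smul_left]
      have hkey : 2 * H s * ‖S s (f s)‖ ^ 2 - 2 * (D s) ^ 2
            + 2 * H s * (inner ℝ (S s (f s)) (e s) : ℝ)
            - 2 * D s * (inner ℝ (e s) (f s) : ℝ)
          = 2 * H s * ‖v‖ ^ 2 + 2 * H s * (inner ℝ v (e s) : ℝ) := by
        rw [hv2, hve, real_inner_comm (e s) (f s)]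
        field_simp
        ring
      have hprod := mul_le_mul_of_nonneg_right (hDlow s hs) hH0.le
      have hint1 : 0 ≤ H s * (2 * ‖v‖ - ‖e s‖) ^ 2 := by positivity
      have hint2 : 0 ≤ H s * ((inner ℝ v (e s) : ℝ) + ‖v‖ * ‖e s‖) := by
        apply mul_nonneg hH0.le
        have := abs_real_inner_le_norm v (e s)
        nlinarith [(abs_le.1 this).1]
      have hint3 : 0 ≤ H s * (M ^ 2 * H s - ‖e s‖ ^ 2) :=
        mul_nonneg hH0.le (by linarith)
      rw [hc₀def]
      exact aux_quad hprod hkey hint1 hint2 hint3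
    -- almost-monotonicity of lam
    have hlam_cmp1 : ∀ s ∈ Set.Icc (0:ℝ) 1, s ≤ t → lam s ≤ lam t + c₀ := by
      intro s hs hst
      have h := my_le_deriv (B := -c₀) hst
        (fun u hu => hlamD u ⟨le_trans hs.1 hu.1, le_trans hu.2 ht1⟩)
        (fun u hu => hlam_low u ⟨le_trans hs.1 hu.1, le_trans hu.2 ht1⟩)
      have h9 : 0 ≤ 1 - (t - s) := by have := hs.1; linarith
      nlinarith [h, mul_nonneg hc₀ h9]
    have hlam_cmp2 : ∀ u ∈ Set.Icc (0:ℝ) 1, t ≤ u → lam t - c₀ ≤ lam u := by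
      intro u hu htu
      have h := my_le_deriv (B := -c₀) htu
        (fun w hw => hlamD w ⟨le_trans ht0 hw.1, le_trans hw.2 hu.2⟩)
        (fun w hw => hlam_low w ⟨le_trans ht0 hw.1, le_trans hw.2 hu.2⟩)
      have h9 : 0 ≤ 1 - (u - t) := by have := hu.2; linarith
      nlinarith [h, mul_nonneg hc₀ h9]
    -- log of H
    set G : ℝ → ℝ := fun s => Real.log (H s) with hGdef
    set G' : ℝ → ℝ := fun s => (2 * D s + 2 * (inner ℝ (e s) (f s) : ℝ)) / H s with hG'def
    have hGd : ∀ s ∈ Set.Icc (0:ℝ) 1, HasDerivAt G (G' s) s := fun s hs =>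
      (hH' s).log (ne_of_gt (hpos s hs))
    have hGub : ∀ s ∈ Set.Icc (0:ℝ) 1, G' s ≤ 2 * lam s + 2 * M := by
      intro s hs
      have hH0 : 0 < H s := hpos s hs
      have hip : |(inner ℝ (e s) (f s) : ℝ)| ≤ M * H s := by
        have h1 := abs_real_inner_le_norm (e s) (f s)
        have h2 := henorm s hs
        rw [hHs s]
        nlinarith [mul_le_mul_of_nonneg_right h2 (norm_nonneg (f s))]
      have hd : D s / H s * H s = D s := div_mul_cancel₀ _ (ne_of_gt hH0)
      rw [hG'def, hlamdef]
      beta_reduce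
      rw [div_le_iff₀ hH0]
      nlinarith [(abs_le.1 hip).2, hd]
    have hGlb : ∀ s ∈ Set.Icc (0:ℝ) 1, 2 * lam s - 2 * M ≤ G' s := by
      intro s hs
      have hH0 : 0 < H s := hpos s hs
      have hip : |(inner ℝ (e s) (f s) : ℝ)| ≤ M * H s := by
        have h1 := abs_real_inner_le_norm (e s) (f s)
        have h2 := henorm s hs
        rw [hHs s]
        nlinarith [mul_le_mul_of_nonneg_right h2 (norm_nonneg (f s))]
      have hd : D s / H s * H s = D s := div_mul_cancel₀ _ (ne_of_gt hH0)
      rw [hG'def, hlamdef]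
      beta_reduce
      rw [le_div_iff₀ hH0]
      nlinarith [(abs_le.1 hip).1, hd]
    -- two mean-value estimates
    have hup : G t - G 0 ≤ (2 * (lam t + c₀) + 2 * M) * (t - 0) := by
      apply my_deriv_le ht0
        (fun s hs => hGd s ⟨hs.1, le_trans hs.2 ht1⟩)
      intro s hs
      have hs1 : s ∈ Set.Icc (0:ℝ) 1 := ⟨hs.1, le_trans hs.2 ht1⟩
      have := hGub s hs1
      have := hlam_cmp1 s hs1 hs.2
      linarith
    have hdown : (2 * (lam t - c₀) - 2 * M) * (1 - t) ≤ G 1 - G t := by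
      apply my_le_deriv ht1
        (fun s hs => hGd s ⟨le_trans ht0 hs.1, hs.2⟩)
      intro s hs
      have hs1 : s ∈ Set.Icc (0:ℝ) 1 := ⟨le_trans ht0 hs.1, hs.2⟩
      have := hGlb s hs1
      have := hlam_cmp2 s hs1 hs.1
      linarith
    have hGfinal : G t ≤ (1 - t) * G 0 + t * G 1 + (c₀ + M) := by
      have h1 : G t ≤ G 0 + (2 * lam t + 2 * c₀ + 2 * M) * t := by nlinarith [hup]
      have h2 : G t ≤ G 1 - (2 * lam t - 2 * c₀ - 2 * M) * (1 - t) := by nlinarith [hdown]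
      nlinarith [mul_le_mul_of_nonneg_left h1 (by linarith : (0:ℝ) ≤ 1 - t),
        mul_le_mul_of_nonneg_left h2 ht0,
        mul_nonneg (add_nonneg hc₀ hM) (sq_nonneg (t - 1/2))]
    -- exponentiate
    have h0mem : (0:ℝ) ∈ Set.Icc (0:ℝ) 1 := by norm_num
    have h1mem : (1:ℝ) ∈ Set.Icc (0:ℝ) 1 := by norm_num
    have hH0pos : 0 < H 0 := hpos 0 h0mem
    have hH1pos : 0 < H 1 := hpos 1 h1mem
    have hHtpos : 0 < H t := hpos t ⟨ht0, ht1⟩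
    have hGlog : ∀ s : ℝ, G s = Real.log (H s) := fun s => by rw [hGdef]
    have hgoal : H t ≤ Real.exp (4 * (M₀ + M₁ + M₂ + M₁ ^ 2 + M₂ ^ 2))
        * (H 0) ^ (1 - t) * (H 1) ^ t := by
      have step1 : H t ≤ Real.exp ((1 - t) * Real.log (H 0) + t * Real.log (H 1) + (c₀ + M)) := by
        calc H t = Real.exp (Real.log (H t)) := (Real.exp_log hHtpos).symm
          _ ≤ _ := by
            apply Real.exp_le_exp.2
            rw [← hGlog t, ← hGlog 0, ← hGlog 1]
            exact hGfinal
      calc H t ≤ Real.exp ((1 - t) * Real.log (H 0) + t * Real.log (H 1) + (c₀ + M)) := step1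
        _ = Real.exp (c₀ + M) * ((H 0) ^ (1 - t) * (H 1) ^ t) := by
            rw [Real.rpow_def_of_pos hH0pos, Real.rpow_def_of_pos hH1pos,
              ← Real.exp_add, ← Real.exp_add]
            ring_nf
        _ ≤ Real.exp (4 * (M₀ + M₁ + M₂ + M₁ ^ 2 + M₂ ^ 2)) * ((H 0) ^ (1 - t) * (H 1) ^ t) := by
            apply mul_le_mul_of_nonneg_right (Real.exp_le_exp.2 ?_)
              (mul_nonneg (Real.rpow_nonneg (hHnn 0) _) (Real.rpow_nonneg (hHnn 1) _))
            rw [hc₀def, hMdef]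
            nlinarith [sq_nonneg (M₁ - M₂)]
        _ = _ := by ring
    rw [hHs t, hHs 0, hHs 1] at hgoal
    exact hgoal
  · -- degenerate case: H vanishes somewhere, show H t = 0
    push_neg at hpos
    obtain ⟨s₀, hs₀, hs₀z⟩ := hpos
    have hHz : H s₀ = 0 := le_antisymm hs₀z (hHnn s₀)
    have hHt : H t = 0 := by
      rcases le_total s₀ t with hle | hle
      · -- forward: u s = H s * exp (-c * s) is antitone
        have key : H t * Real.exp (-c * t) ≤ H s₀ * Real.exp (-c * s₀) := by
          have := my_mono (g := fun s => -(H s * Real.exp (-c * s)))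
            (g' := fun s => -((2 * D s + 2 * (inner ℝ (e s) (f s) : ℝ)) * Real.exp (-c * s)
              + H s * (Real.exp (-c * s) * -c))) hle
            (fun s hs => by
              have hsub : s ∈ Set.Icc (0:ℝ) 1 :=
                ⟨le_trans hs₀.1 hs.1, le_trans hs.2 ht1⟩
              exact ((hH' s).mul (((hasDerivAt_id s).const_mul (-c)).congr_deriv
                (by ring) |>.exp)).neg)
            (fun s hs => by
              have hsub : s ∈ Set.Icc (0:ℝ) 1 :=
                ⟨le_trans hs₀.1 hs.1, le_trans hs.2 ht1⟩
              have hb := hHderiv_bound s hsub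
              have hexp : 0 < Real.exp (-c * s) := Real.exp_pos _
              have habs := abs_le.1 hb
              beta_reduce
              nlinarith [mul_le_mul_of_nonneg_right habs.2 hexp.le])
          simpa using this
        have : H t * Real.exp (-c * t) ≤ 0 := by rw [hHz] at key; simpa using key
        have hexp : 0 < Real.exp (-c * t) := Real.exp_pos _
        have h0 : H t * Real.exp (-c * t) = 0 :=
          le_antisymm this (mul_nonneg (hHnn t) hexp.le)
        rcases mul_eq_zero.mp h0 with h | h
        · exact h
        · exact absurd h (ne_of_gt hexp)
      · -- backward: v s = H s * exp (c * s) is monotone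
        have key : H t * Real.exp (c * t) ≤ H s₀ * Real.exp (c * s₀) := by
          have := my_mono (g := fun s => H s * Real.exp (c * s))
            (g' := fun s => (2 * D s + 2 * (inner ℝ (e s) (f s) : ℝ)) * Real.exp (c * s)
              + H s * (Real.exp (c * s) * c)) hle
            (fun s hs => by
              exact ((hH' s).mul (((hasDerivAt_id s).const_mul c).congr_deriv
                (by ring) |>.exp)))
            (fun s hs => by
              have hsub : s ∈ Set.Icc (0:ℝ) 1 :=
                ⟨le_trans ht0 hs.1, le_trans hs.2 hs₀.2⟩
              have hb := hHderiv_bound s hsub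
              have hexp : 0 < Real.exp (c * s) := Real.exp_pos _
              have habs := abs_le.1 hb
              beta_reduce
              nlinarith [mul_le_mul_of_nonneg_right habs.1 hexp.le])
          exact this
        have : H t * Real.exp (c * t) ≤ 0 := by rw [hHz] at key; simpa using key
        have hexp : 0 < Real.exp (c * t) := Real.exp_pos _
        have h0 : H t * Real.exp (c * t) = 0 :=
          le_antisymm this (mul_nonneg (hHnn t) hexp.le)
        rcases mul_eq_zero.mp h0 with h | h
        · exact h
        · exact absurd h (ne_of_gt hexp)
    have hft : ‖f t‖ ^ 2 = 0 := by rw [hHdef] at hHt; simpa using hHt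
    rw [hft]
    positivity
end
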